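/- Every nonzero finitely supported closed 2-flow on X₁ × X₂ is a finite sum of 2-flow-loops without cancellations: there exist 2-flow-loops [A_1],…,[A_r] with m = Σ_i [A_i] and |m| = Σ_i |[A_i]|. -/

import Mathlib

set_option linter.unusedSectionVars false
set_option maxHeartbeats 800000


section TwoFlows

variable {X₁ X₂ : Type*} [DecidableEq X₁] [DecidableEq X₂]

/-- Total mass of a finitely supported flow. -/
def flowMass (m : (X₁ × X₂) →₀ ℝ) : ℝ := ∑ p ∈ m.support, |m p|

/-- A finitely supported 2-flow is closed if both marginal signed measures vanish. -/
def IsClosed2Flow (m : (X₁ × X₂) →₀ ℝ) : Prop :=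
  (∀ v : X₁, ∑ p ∈ m.support, (if p.1 = v then m p else 0) = 0) ∧
  (∀ v : X₂, ∑ p ∈ m.support, (if p.2 = v then m p else 0) = 0)

/-- A 2-flow-loop: a closed flow supported on a cyclic alternating sequence of
edges `(a_j, b_j), (a_{j+1}, b_j)` with constant-absolute-value coefficients. -/
def IsTwoFlowLoop (L : (X₁ × X₂) →₀ ℝ) : Prop :=
  ∃ (n : ℕ) (w : ℝ), w ≠ 0 ∧ ∃ (a : Fin (n+1) → X₁) (b : Fin (n+1) → X₂),
    Function.Injective a ∧ Function.Injective b ∧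
    L = w • ∑ j : Fin (n+1),
      (Finsupp.single (a j, b j) (1 : ℝ) - Finsupp.single (a (j + 1), b j) (1 : ℝ))

lemma sum_if_subset (m : (X₁ × X₂) →₀ ℝ) {S : Finset (X₁ × X₂)} (hS : m.support ⊆ S)
    (f : (X₁ × X₂) → Prop) [DecidablePred f] :
    (∑ p ∈ m.support, if f p then m p else 0) = ∑ p ∈ S, if f p then m p else 0 :=
  Finset.sum_subset hS (fun p _ hp => by
    simp [Finsupp.notMem_support_iff.mp hp])

lemma flowMass_eq (m : (X₁ × X₂) →₀ ℝ) {S : Finset (X₁ × X₂)} (hS : m.support ⊆ S) :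
    flowMass m = ∑ p ∈ S, |m p| :=
  Finset.sum_subset hS (fun p _ hp => by simp [Finsupp.notMem_support_iff.mp hp])

lemma isClosed_iff (m : (X₁ × X₂) →₀ ℝ) {S : Finset (X₁ × X₂)} (hS : m.support ⊆ S) :
    IsClosed2Flow m ↔
      (∀ v : X₁, ∑ p ∈ S, (if p.1 = v then m p else 0) = 0) ∧
      (∀ v : X₂, ∑ p ∈ S, (if p.2 = v then m p else 0) = 0) := by
  unfold IsClosed2Flow
  constructor
  · rintro ⟨h1, h2⟩
    exact ⟨fun v => by rw [← sum_if_subset m hS (fun p => p.1 = v)]; exact h1 v,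
           fun v => by rw [← sum_if_subset m hS (fun p => p.2 = v)]; exact h2 v⟩
  · rintro ⟨h1, h2⟩
    exact ⟨fun v => by rw [sum_if_subset m hS (fun p => p.1 = v)]; exact h1 v,
           fun v => by rw [sum_if_subset m hS (fun p => p.2 = v)]; exact h2 v⟩

lemma isClosed_sub {m L : (X₁ × X₂) →₀ ℝ} (hm : IsClosed2Flow m) (hL : IsClosed2Flow L) :
    IsClosed2Flow (m - L) := by
  set S := m.support ∪ L.support with hSdef
  have hsub : (m - L).support ⊆ S := Finsupp.support_sub
  have hmS : m.support ⊆ S := Finset.subset_union_left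
  have hLS : L.support ⊆ S := Finset.subset_union_right
  rw [isClosed_iff _ hsub]
  rw [isClosed_iff _ hmS] at hm
  rw [isClosed_iff _ hLS] at hL
  constructor
  · intro v
    have : ∀ p : X₁ × X₂, (if p.1 = v then (m - L) p else 0)
        = (if p.1 = v then m p else 0) - (if p.1 = v then L p else 0) := by
      intro p; by_cases h : p.1 = v <;> simp [h, Finsupp.sub_apply]
    simp only [this, Finset.sum_sub_distrib, hm.1 v, hL.1 v, sub_zero]
  · intro v
    have : ∀ p : X₁ × X₂, (if p.2 = v then (m - L) p else 0)
        = (if p.2 = v then m p else 0) - (if p.2 = v then L p else 0) := by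
      intro p; by_cases h : p.2 = v <;> simp [h, Finsupp.sub_apply]
    simp only [this, Finset.sum_sub_distrib, hm.2 v, hL.2 v, sub_zero]

lemma exists_pos_in_row {m : (X₁ × X₂) →₀ ℝ} (hm : IsClosed2Flow m) {x : X₁} {y : X₂}
    (h : m (x, y) < 0) : ∃ y', y' ≠ y ∧ 0 < m (x, y') := by
  by_contra hcon
  push_neg at hcon
  have hxy : (x, y) ∈ m.support := Finsupp.mem_support_iff.mpr h.ne
  have hlt : (∑ p ∈ m.support, if p.1 = x then m p else 0) < ∑ p ∈ m.support, (0:ℝ) := by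
    apply Finset.sum_lt_sum
    · intro p hp
      by_cases hp1 : p.1 = x
      · simp only [hp1, if_true]
        by_cases hp2 : p.2 = y
        · have : p = (x, y) := Prod.ext hp1 hp2
          rw [this]; exact h.le
        · have := hcon p.2 hp2
          rw [← hp1] at this; simpa using this
      · simp [hp1]
    · exact ⟨(x, y), hxy, by simp [h]⟩
  rw [Finset.sum_const_zero] at hlt
  exact absurd (hm.1 x) hlt.ne

lemma exists_neg_in_col {m : (X₁ × X₂) →₀ ℝ} (hm : IsClosed2Flow m) {x : X₁} {y : X₂}
    (h : 0 < m (x, y)) : ∃ x', x' ≠ x ∧ m (x', y) < 0 := by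
  by_contra hcon
  push_neg at hcon
  have hxy : (x, y) ∈ m.support := Finsupp.mem_support_iff.mpr h.ne'
  have hlt : (∑ p ∈ m.support, (0:ℝ)) < ∑ p ∈ m.support, if p.2 = y then m p else 0 := by
    apply Finset.sum_lt_sum
    · intro p hp
      by_cases hp2 : p.2 = y
      · simp only [hp2, if_true]
        by_cases hp1 : p.1 = x
        · have : p = (x, y) := Prod.ext hp1 hp2
          rw [this]; exact h.le
        · have := hcon p.1 hp1
          rw [← hp2] at this; simpa using this
      · simp [hp2]
    · exact ⟨(x, y), hxy, by simp [h]⟩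
  rw [Finset.sum_const_zero] at hlt
  exact absurd (hm.2 y) hlt.ne'

lemma exists_cycle {m : (X₁ × X₂) →₀ ℝ} (hm : IsClosed2Flow m) (hne : m ≠ 0) :
    ∃ (n : ℕ) (a : Fin (n+1) → X₁) (b : Fin (n+1) → X₂),
      1 ≤ n ∧ Function.Injective a ∧ Function.Injective b ∧
      (∀ t, 0 < m (a t, b t)) ∧ (∀ t, m (a (t + 1), b t) < 0) := by
  classical
  -- find a positive entry
  obtain ⟨p₀, hp₀ne⟩ : ∃ p, m p ≠ 0 := by
    by_contra hc; push_neg at hc; exact hne (Finsupp.ext fun p => hc p)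
  have hstart : ∃ p : X₁ × X₂, 0 < m p := by
    rcases lt_or_gt_of_ne hp₀ne with hneg | hpos
    · obtain ⟨y', _, hy'⟩ := exists_pos_in_row hm (show m (p₀.1, p₀.2) < 0 by simpa using hneg)
      exact ⟨(p₀.1, y'), hy'⟩
    · exact ⟨p₀, hpos⟩
  obtain ⟨q₀, hq₀⟩ := hstart
  -- the step function
  have step : ∀ p : X₁ × X₂, 0 < m p →
      ∃ q : X₁ × X₂, 0 < m q ∧ q.1 ≠ p.1 ∧ q.2 ≠ p.2 ∧ m (q.1, p.2) < 0 := by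
    intro p hp
    obtain ⟨x', hx', hneg⟩ := exists_neg_in_col hm (show 0 < m (p.1, p.2) by simpa using hp)
    obtain ⟨y', hy', hpos⟩ := exists_pos_in_row hm hneg
    exact ⟨(x', y'), hpos, hx', hy', hneg⟩
  let F : {p : X₁ × X₂ // 0 < m p} → {p : X₁ × X₂ // 0 < m p} :=
    fun p => ⟨(step p.1 p.2).choose, (step p.1 p.2).choose_spec.1⟩
  let e : ℕ → {p : X₁ × X₂ // 0 < m p} := fun k => F^[k] ⟨q₀, hq₀⟩
  let a : ℕ → X₁ := fun k => (e k).1.1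
  let b : ℕ → X₂ := fun k => (e k).1.2
  have hestep : ∀ k, e (k + 1) = F (e k) := fun k => Function.iterate_succ_apply' F k _
  have hpos : ∀ k, 0 < m (a k, b k) := fun k => (e k).2
  have hstepspec : ∀ k, a (k+1) ≠ a k ∧ b (k+1) ≠ b k ∧ m (a (k+1), b k) < 0 := by
    intro k
    have h := (step (e k).1 (e k).2).choose_spec
    have h1 : a (k+1) = (step (e k).1 (e k).2).choose.1 := by
      show (e (k+1)).1.1 = _; rw [hestep k]
    have h2 : b (k+1) = (step (e k).1 (e k).2).choose.2 := by
      show (e (k+1)).1.2 = _; rw [hestep k]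
    rw [h1, h2]
    exact ⟨h.2.1, h.2.2.1, h.2.2.2⟩
  have haneq : ∀ k, a (k+1) ≠ a k := fun k => (hstepspec k).1
  have hbneq : ∀ k, b (k+1) ≠ b k := fun k => (hstepspec k).2.1
  have hneg : ∀ k, m (a (k+1), b k) < 0 := fun k => (hstepspec k).2.2
  -- pigeonhole
  set N := (m.support.image Prod.fst).card with hN
  have hmaps : ∀ k ∈ Finset.range (N+1), a k ∈ m.support.image Prod.fst := by
    intro k _
    exact Finset.mem_image.mpr ⟨(a k, b k), Finsupp.mem_support_iff.mpr (hpos k).ne', rfl⟩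
  obtain ⟨i₁, hi₁, j₁, hj₁, hne₁, heq₁⟩ :=
    Finset.exists_ne_map_eq_of_card_lt_of_maps_to (by simp [hN]) hmaps
  -- the minimal repeat index
  have hPne : ∃ j, ∃ i < j, a i = a j ∨ b i = b j := by
    rcases hne₁.lt_or_gt with h | h
    · exact ⟨j₁, i₁, h, Or.inl heq₁⟩
    · exact ⟨i₁, j₁, h, Or.inl heq₁.symm⟩
  set j₀ := Nat.find hPne with hj₀def
  obtain ⟨i₀, hi₀lt, hi₀⟩ := Nat.find_spec hPne
  have hmin : ∀ {u v : ℕ}, u < v → v < j₀ → a u ≠ a v ∧ b u ≠ b v := by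
    intro u v huv hv
    have := Nat.find_min hPne hv
    push_neg at this
    exact this u huv
  by_cases hA : ∃ i < j₀, a i = a j₀
  · -- case A : a-repeat
    obtain ⟨i, hilt, hai⟩ := hA
    have hge2 : i + 2 ≤ j₀ := by
      rcases Nat.lt_or_ge (i+1) j₀ with h | h
      · omega
      · exfalso
        have : j₀ = i + 1 := by omega
        exact haneq i (by rw [← this, hai])
    set n := j₀ - i - 1 with hn
    have hn1 : 1 ≤ n := by omega
    have hij : i + (n + 1) = j₀ := by omega
    refine ⟨n, fun t => a (i + t.1), fun t => b (i + t.1), hn1, ?_, ?_, fun t => hpos _, ?_⟩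
    · intro t s hts
      dsimp only at hts
      by_contra hne'
      have htv : t.1 ≠ s.1 := fun h => hne' (Fin.ext h)
      rcases htv.lt_or_gt with h | h
      · exact (hmin (by omega : i + t.1 < i + s.1) (by omega : i + s.1 < j₀)).1 hts
      · exact (hmin (by omega : i + s.1 < i + t.1) (by omega : i + t.1 < j₀)).1 hts.symm
    · intro t s hts
      dsimp only at hts
      by_contra hne'
      have htv : t.1 ≠ s.1 := fun h => hne' (Fin.ext h)
      rcases htv.lt_or_gt with h | h
      · exact (hmin (by omega : i + t.1 < i + s.1) (by omega : i + s.1 < j₀)).2 hts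
      · exact (hmin (by omega : i + s.1 < i + t.1) (by omega : i + t.1 < j₀)).2 hts.symm
    · intro t
      by_cases ht : t.1 = n
      · have h1 : t = Fin.last n := Fin.ext ht
        have h2 : (t + 1 : Fin (n+1)) = 0 := by rw [h1]; exact Fin.last_add_one n
        rw [h2]
        show m (a (i + 0), b (i + t.1)) < 0
        have : a (i + 0) = a ((i + t.1) + 1) := by
          rw [ht]
          show a i = a (i + n + 1)
          rw [hai]; congr 1; omega
        rw [this]; exact hneg (i + t.1)
      · have h2 : ((t + 1 : Fin (n+1))).1 = t.1 + 1 := by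
          rw [Fin.val_add_one]
          simp only [if_neg (fun h : t = Fin.last n => ht (by rw [h]; rfl))]
        show m (a (i + (t+1 : Fin (n+1)).1), b (i + t.1)) < 0
        rw [h2]
        have : i + (t.1 + 1) = (i + t.1) + 1 := by omega
        rw [this]
        exact hneg (i + t.1)
  · -- case B : b-repeat
    have hbi : b i₀ = b j₀ := by
      rcases hi₀ with h | h
      · exact absurd ⟨i₀, hi₀lt, h⟩ hA
      · exact h
    set i := i₀
    have hilt : i < j₀ := hi₀lt
    have hge2 : i + 2 ≤ j₀ := by
      rcases Nat.lt_or_ge (i+1) j₀ with h | h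
      · omega
      · exfalso
        have : j₀ = i + 1 := by omega
        exact hbneq i (by rw [← this, hbi])
    set n := j₀ - i - 1 with hn
    have hn1 : 1 ≤ n := by omega
    have hij : i + 1 + n = j₀ := by omega
    have haj : ∀ u < j₀, a u ≠ a j₀ := fun u hu h => hA ⟨u, hu, h⟩
    refine ⟨n, fun t => a (i + 1 + t.1), fun t => b (i + 1 + t.1), hn1, ?_, ?_,
      fun t => hpos _, ?_⟩
    · intro t s hts
      dsimp only at hts
      by_contra hne'
      have htv : t.1 ≠ s.1 := fun h => hne' (Fin.ext h)
      have htle : i + 1 + t.1 ≤ j₀ := by omega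
      have hsle : i + 1 + s.1 ≤ j₀ := by omega
      rcases htv.lt_or_gt with h | h
      · rcases Nat.lt_or_ge (i + 1 + s.1) j₀ with h' | h'
        · exact (hmin (by omega : i + 1 + t.1 < i + 1 + s.1) h').1 hts
        · have : i + 1 + s.1 = j₀ := by omega
          rw [this] at hts
          exact haj _ (by omega) hts
      · rcases Nat.lt_or_ge (i + 1 + t.1) j₀ with h' | h'
        · exact (hmin (by omega : i + 1 + s.1 < i + 1 + t.1) h').1 hts.symm
        · have : i + 1 + t.1 = j₀ := by omega
          rw [this] at hts
          exact haj _ (by omega) hts.symm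
    · intro t s hts
      dsimp only at hts
      by_contra hne'
      have htv : t.1 ≠ s.1 := fun h => hne' (Fin.ext h)
      -- map index: if value = n use i else i+1+val; all < j₀, b agrees
      have key : ∀ u : Fin (n+1), b (i + 1 + u.1) = b (if u.1 = n then i else i + 1 + u.1) := by
        intro u
        by_cases hu : u.1 = n
        · rw [if_pos hu, hu]
          have : i + 1 + n = j₀ := hij
          rw [this, ← hbi]
        · rw [if_neg hu]
      rw [key t, key s] at hts
      set ct := if t.1 = n then i else i + 1 + t.1 with hct
      set cs := if s.1 = n then i else i + 1 + s.1 with hcs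
      have hctlt : ct < j₀ := by rw [hct]; split <;> omega
      have hcslt : cs < j₀ := by rw [hcs]; split <;> omega
      have hcne : ct ≠ cs := by
        rw [hct, hcs]
        split <;> split <;> omega
      rcases hcne.lt_or_gt with h | h
      · exact (hmin h hcslt).2 hts
      · exact (hmin h hctlt).2 hts.symm
    · intro t
      by_cases ht : t.1 = n
      · have h1 : t = Fin.last n := Fin.ext ht
        have h2 : (t + 1 : Fin (n+1)) = 0 := by rw [h1]; exact Fin.last_add_one n
        rw [h2]
        show m (a (i + 1 + 0), b (i + 1 + t.1)) < 0
        have hb' : b (i + 1 + t.1) = b i := by rw [ht, hij, ← hbi]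
        rw [hb']
        have ha' : a (i + 1 + 0) = a (i + 1) := by norm_num
        rw [ha']
        exact hneg i
      · have h2 : ((t + 1 : Fin (n+1))).1 = t.1 + 1 := by
          rw [Fin.val_add_one]
          simp only [if_neg (fun h : t = Fin.last n => ht (by rw [h]; rfl))]
        show m (a (i + 1 + (t+1 : Fin (n+1)).1), b (i + 1 + t.1)) < 0
        rw [h2]
        have : i + 1 + (t.1 + 1) = (i + 1 + t.1) + 1 := by omega
        rw [this]
        exact hneg (i + 1 + t.1)

lemma cycle_loop {m : (X₁ × X₂) →₀ ℝ} {n : ℕ} (hn : 1 ≤ n)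
    (a : Fin (n+1) → X₁) (b : Fin (n+1) → X₂)
    (ha : Function.Injective a) (hb : Function.Injective b)
    (hpos : ∀ t, 0 < m (a t, b t)) (hneg : ∀ t, m (a (t + 1), b t) < 0) :
    ∃ L : (X₁ × X₂) →₀ ℝ, IsTwoFlowLoop L ∧ IsClosed2Flow L ∧
      (∀ p, |m p - L p| = |m p| - |L p|) ∧ ∃ p, L p ≠ 0 ∧ L p = m p := by
  classical
  have hsne : ∀ s : Fin (n+1), s + 1 ≠ s := by
    intro s h
    have h10 : (1 : Fin (n+1)) = 0 := by
      have := congrArg (fun z => z - s) h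
      simpa [add_sub_cancel_right] using this
    have := congrArg Fin.val h10
    rw [Fin.val_one', Fin.val_zero, Nat.mod_eq_of_lt (by omega)] at this
    exact one_ne_zero this
  -- notation for the two edge families
  set P : Fin (n+1) → X₁ × X₂ := fun t => (a t, b t) with hP
  set Nn : Fin (n+1) → X₁ × X₂ := fun t => (a (t + 1), b t) with hNn
  have hPinj : Function.Injective P := fun t s h => hb (congrArg Prod.snd h)
  have hNinj : Function.Injective Nn := fun t s h => hb (congrArg Prod.snd h)
  have hPN : ∀ s t, P s ≠ Nn t := by
    intro s t h
    have hbst : b s = b t := congrArg Prod.snd h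
    have hst : s = t := hb hbst
    have : a s = a (t + 1) := congrArg Prod.fst h
    rw [hst] at this
    exact hsne t (ha this).symm
  -- the weight
  have hune : (Finset.univ : Finset (Fin (n+1))).Nonempty := Finset.univ_nonempty
  set w : ℝ := Finset.univ.inf' hune (fun t => min (m (P t)) (-(m (Nn t)))) with hw
  have hwpos : 0 < w := by
    rw [hw, Finset.lt_inf'_iff]
    intro t _
    exact lt_min (hpos t) (by simpa using (hneg t))
  have hwle1 : ∀ t, w ≤ m (P t) := fun t =>
    le_trans (Finset.inf'_le _ (Finset.mem_univ t)) (min_le_left _ _)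
  have hwle2 : ∀ t, w ≤ -(m (Nn t)) := fun t =>
    le_trans (Finset.inf'_le _ (Finset.mem_univ t)) (min_le_right _ _)
  -- the loop
  set L₀ : (X₁ × X₂) →₀ ℝ :=
    ∑ j : Fin (n+1), (Finsupp.single (P j) (1 : ℝ) - Finsupp.single (Nn j) (1 : ℝ)) with hL₀
  set L : (X₁ × X₂) →₀ ℝ := w • L₀ with hLdef
  have hL₀apply : ∀ p, L₀ p = ∑ j : Fin (n+1),
      ((if P j = p then (1:ℝ) else 0) - (if Nn j = p then (1:ℝ) else 0)) := by
    intro p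
    rw [hL₀, Finsupp.finset_sum_apply]
    congr 1; funext j
    rw [Finsupp.sub_apply, Finsupp.single_apply, Finsupp.single_apply]
  have hLP : ∀ s, L₀ (P s) = 1 := by
    intro s
    rw [hL₀apply]
    have h1 : ∀ j : Fin (n+1), ((if P j = P s then (1:ℝ) else 0) -
        (if Nn j = P s then (1:ℝ) else 0)) = if j = s then 1 else 0 := by
      intro j
      have hB : (if Nn j = P s then (1:ℝ) else 0) = 0 :=
        if_neg (fun h : Nn j = P s => hPN s j h.symm)
      have hA : (if P j = P s then (1:ℝ) else 0) = if j = s then 1 else 0 := by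
        by_cases h : j = s
        · rw [if_pos (by rw [h] : P j = P s), if_pos h]
        · rw [if_neg (fun h' : P j = P s => h (hPinj h')), if_neg h]
      rw [hA, hB, sub_zero]
    simp only [h1]
    simp
  have hLN : ∀ s, L₀ (Nn s) = -1 := by
    intro s
    rw [hL₀apply]
    have h1 : ∀ j : Fin (n+1), ((if P j = Nn s then (1:ℝ) else 0) -
        (if Nn j = Nn s then (1:ℝ) else 0)) = if j = s then -1 else 0 := by
      intro j
      have hA : (if P j = Nn s then (1:ℝ) else 0) = 0 := if_neg (hPN j s)
      have hB : (if Nn j = Nn s then (1:ℝ) else 0) = if j = s then 1 else 0 := by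
        by_cases h : j = s
        · rw [if_pos (by rw [h] : Nn j = Nn s), if_pos h]
        · rw [if_neg (fun h' : Nn j = Nn s => h (hNinj h')), if_neg h]
      rw [hA, hB, zero_sub]
      by_cases h : j = s <;> simp [h]
    simp only [h1]
    simp
  have hLZ : ∀ p, (∀ s, P s ≠ p) → (∀ s, Nn s ≠ p) → L₀ p = 0 := by
    intro p h1 h2
    rw [hL₀apply]
    apply Finset.sum_eq_zero
    intro j _
    rw [if_neg (h1 j), if_neg (h2 j), sub_zero]
  have hLapply : ∀ p, L p = w * L₀ p := by
    intro p; rw [hLdef, Finsupp.smul_apply, smul_eq_mul]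
  -- support of L
  set E : Finset (X₁ × X₂) :=
    (Finset.univ.image P) ∪ (Finset.univ.image Nn) with hE
  have hsuppL : L.support ⊆ E := by
    intro p hp
    rw [Finsupp.mem_support_iff] at hp
    by_contra hpe
    rw [hE, Finset.mem_union, Finset.mem_image, Finset.mem_image] at hpe
    push_neg at hpe
    have := hLZ p (fun s => hpe.1 s (Finset.mem_univ s)) (fun s => hpe.2 s (Finset.mem_univ s))
    rw [hLapply, this, mul_zero] at hp
    exact hp rfl
  have hdisj : Disjoint (Finset.univ.image P) (Finset.univ.image Nn) := by
    rw [Finset.disjoint_left]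
    intro p hp hq
    rw [Finset.mem_image] at hp hq
    obtain ⟨s, _, hs⟩ := hp
    obtain ⟨t, _, ht⟩ := hq
    exact hPN s t (hs.trans ht.symm)
  -- closedness of L
  have hLclosed : IsClosed2Flow L := by
    have key : ∀ (g : (X₁ × X₂) → ℝ), (∑ p ∈ E, g p) =
        ∑ t : Fin (n+1), g (P t) + ∑ t : Fin (n+1), g (Nn t) := by
      intro g
      rw [hE, Finset.sum_union hdisj,
        Finset.sum_image (fun s _ t _ h => hPinj h),
        Finset.sum_image (fun s _ t _ h => hNinj h)]
    constructor
    · intro v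
      rw [sum_if_subset L hsuppL (fun p => p.1 = v), key]
      have e1 : ∀ t : Fin (n+1), (if (P t).1 = v then L (P t) else 0)
          = if a t = v then w else 0 := by
        intro t
        rw [hLapply, hLP, mul_one]
      have e2 : ∀ t : Fin (n+1), (if (Nn t).1 = v then L (Nn t) else 0)
          = -(if a (t + 1) = v then w else 0) := by
        intro t
        rw [hLapply, hLN]
        show (if a (t+1) = v then w * (-1) else 0) = _
        by_cases h : a (t + 1) = v <;> simp [h]
      simp only [e1, e2, Finset.sum_neg_distrib]
      have : ∑ t : Fin (n+1), (if a (t + 1) = v then w else 0)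
          = ∑ t : Fin (n+1), (if a t = v then w else 0) :=
        Equiv.sum_comp (Equiv.addRight (1 : Fin (n+1))) (fun t => if a t = v then w else 0)
      rw [this]; ring
    · intro v
      rw [sum_if_subset L hsuppL (fun p => p.2 = v), key]
      have e1 : ∀ t : Fin (n+1), (if (P t).2 = v then L (P t) else 0)
          = if b t = v then w else 0 := by
        intro t
        rw [hLapply, hLP, mul_one]
      have e2 : ∀ t : Fin (n+1), (if (Nn t).2 = v then L (Nn t) else 0)
          = -(if b t = v then w else 0) := by
        intro t
        rw [hLapply, hLN]
        show (if b t = v then w * (-1) else 0) = _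
        by_cases h : b t = v <;> simp [h]
      simp only [e1, e2]
      rw [← Finset.sum_add_distrib]
      simp
  -- alignment
  have halign : ∀ p, |m p - L p| = |m p| - |L p| := by
    intro p
    by_cases h1 : ∃ s, P s = p
    · obtain ⟨s, rfl⟩ := h1
      rw [hLapply, hLP, mul_one]
      have h2 := hwle1 s
      have h3 := hpos s
      rw [abs_of_nonneg (by linarith : (0:ℝ) ≤ m (P s) - w),
        abs_of_pos (show (0:ℝ) < m (P s) from h3), abs_of_pos hwpos]
    · by_cases h2 : ∃ s, Nn s = p
      · obtain ⟨s, rfl⟩ := h2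
        rw [hLapply, hLN]
        have h3 := hwle2 s
        have h4 := hneg s
        rw [show w * (-1) = -w by ring]
        rw [abs_of_nonpos (by linarith : m (Nn s) - -w ≤ 0),
          abs_of_neg (show m (Nn s) < 0 from h4), abs_neg, abs_of_pos hwpos]
        ring
      · push_neg at h1 h2
        rw [hLapply, hLZ p h1 h2, mul_zero]
        simp
  -- attainment
  have hattain : ∃ p, L p ≠ 0 ∧ L p = m p := by
    obtain ⟨t₀, _, ht₀⟩ := Finset.exists_mem_eq_inf' hune (fun t => min (m (P t)) (-(m (Nn t))))
    have hw0 : w = min (m (P t₀)) (-(m (Nn t₀))) := by rw [hw, ht₀]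
    rcases min_cases (m (P t₀)) (-(m (Nn t₀))) with ⟨hmin, _⟩ | ⟨hmin, _⟩
    · refine ⟨P t₀, ?_, ?_⟩
      · rw [hLapply, hLP, mul_one]; exact hwpos.ne'
      · rw [hLapply, hLP, mul_one, hw0, hmin]
    · refine ⟨Nn t₀, ?_, ?_⟩
      · rw [hLapply, hLN]
        intro h
        have : w = 0 := by linarith [mul_neg_one w ▸ h]
        exact hwpos.ne' this
      · rw [hLapply, hLN, hw0, hmin]; ring
  refine ⟨L, ⟨n, w, hwpos.ne', a, b, ha, hb, hLdef⟩, hLclosed, halign, hattain⟩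

lemma exists_good_loop {m : (X₁ × X₂) →₀ ℝ} (hm : IsClosed2Flow m) (hne : m ≠ 0) :
    ∃ L : (X₁ × X₂) →₀ ℝ, IsTwoFlowLoop L ∧ IsClosed2Flow L ∧
      (∀ p, |m p - L p| = |m p| - |L p|) ∧ ∃ p, L p ≠ 0 ∧ L p = m p := by
  obtain ⟨n, a, b, hn, ha, hb, hpos, hneg⟩ := exists_cycle hm hne
  exact cycle_loop hn a b ha hb hpos hneg

theorem stmt14 (m : (X₁ × X₂) →₀ ℝ) (hclosed : IsClosed2Flow m) (hne : m ≠ 0) :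
    ∃ (r : ℕ) (L : Fin r → ((X₁ × X₂) →₀ ℝ)),
      (∀ i, IsTwoFlowLoop (L i)) ∧
      m = ∑ i, L i ∧
      flowMass m = ∑ i, flowMass (L i) := by
  classical
  obtain ⟨M, hM⟩ : ∃ M, m.support.card ≤ M := ⟨m.support.card, le_rfl⟩
  induction M generalizing m with
  | zero =>
      exfalso
      exact hne (Finsupp.support_eq_empty.mp (Finset.card_eq_zero.mp (Nat.le_zero.mp hM)))
  | succ M ih =>
      obtain ⟨L, hLloop, hLclosed, halign, p₀, hp₀ne, hp₀eq⟩ := exists_good_loop hclosed hne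
      -- L vanishes off m's support
      have hLsub : ∀ p, m p = 0 → L p = 0 := by
        intro p hp
        have := halign p
        rw [hp, zero_sub, abs_neg, abs_zero, zero_sub] at this
        have : |L p| = 0 := by linarith [abs_nonneg (L p), this]
        exact abs_eq_zero.mp this
      have hsuppL : L.support ⊆ m.support := by
        intro p hp
        rw [Finsupp.mem_support_iff] at hp ⊢
        exact fun h => hp (hLsub p h)
      have hsubsupp : (m - L).support ⊆ m.support := by
        intro p hp
        rw [Finsupp.mem_support_iff] at hp ⊢
        intro h
        apply hp
        rw [Finsupp.sub_apply, h, hLsub p h, sub_zero]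
      -- mass identity
      have hmass : flowMass (m - L) = flowMass m - flowMass L := by
        rw [flowMass_eq (m - L) hsubsupp, flowMass_eq L hsuppL, flowMass,
          ← Finset.sum_sub_distrib]
        apply Finset.sum_congr rfl
        intro p _
        rw [Finsupp.sub_apply]
        exact halign p
      -- support decreases
      have hp₀mem : p₀ ∈ m.support := by
        rw [Finsupp.mem_support_iff, ← hp₀eq]; exact hp₀ne
      have hp₀not : p₀ ∉ (m - L).support := by
        rw [Finsupp.notMem_support_iff, Finsupp.sub_apply, hp₀eq, sub_self]
      have hcard : (m - L).support.card ≤ M := by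
        have hss : (m - L).support ⊆ m.support.erase p₀ := by
          intro p hp
          rcases eq_or_ne p p₀ with rfl | hpe
          · exact absurd hp hp₀not
          · exact Finset.mem_erase.mpr ⟨hpe, hsubsupp hp⟩
        calc (m - L).support.card ≤ (m.support.erase p₀).card := Finset.card_le_card hss
          _ = m.support.card - 1 := Finset.card_erase_of_mem hp₀mem
          _ ≤ M := by omega
      by_cases hz : m - L = 0
      · refine ⟨1, fun _ => L, fun _ => hLloop, ?_, ?_⟩
        · rw [Finset.sum_const, Finset.card_univ, Fintype.card_fin, one_smul]
          exact (sub_eq_zero.mp hz)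
        · rw [Finset.sum_const, Finset.card_univ, Fintype.card_fin, one_smul]
          rw [sub_eq_zero.mp hz]
      · obtain ⟨r, Ls, hper, hsum, hmass'⟩ :=
          ih (m - L) (isClosed_sub hclosed hLclosed) hz hcard
        refine ⟨r + 1, Fin.cons L Ls, ?_, ?_, ?_⟩
        · intro i
          refine Fin.cases ?_ ?_ i
          · exact hLloop
          · intro j; exact hper j
        · rw [Fin.sum_cons, ← hsum]; abel
        · rw [Fin.sum_univ_succ]
          simp only [Fin.cons_zero, Fin.cons_succ]
          rw [← hmass', hmass]; ring

end TwoFlows
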